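/- Let a ∈ (0,1) and x ∈ (0, 1/2), and set n = 1/x and b = a^x. Then g′(x) < 0 holds if and only if h_n(b) > 0, where h_n(b) = n(1−b)(1−b^{n−2}) + (n−2)(1 + b^{n−2} − 2b^{n−1})·ln b. -/

import Mathlib

/-- `g(x) = ((a^(2x) − a^x)/(a − a^(2x)))·(1/x − 2)`, so that `f(n) = g(1/n)`. -/
noncomputable def pwG (a x : ℝ) : ℝ :=
  ((a ^ (2 * x) - a ^ x) / (a - a ^ (2 * x))) * (1/x - 2)

/-- `h_n(b) = n(1−b)(1−b^(n−2)) + (n−2)(1 + b^(n−2) − 2b^(n−1))·ln b`. -/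
noncomputable def pwH (n b : ℝ) : ℝ :=
  n * (1 - b) * (1 - b ^ (n - 2)) +
    (n - 2) * (1 + b ^ (n - 2) - 2 * b ^ (n - 1)) * Real.log b

/-- For `a ∈ (0,1)`, `x ∈ (0,1/2)`, with `n = 1/x` and `b = a^x`:
`g′(x) < 0` if and only if `h_n(b) > 0`. -/
theorem pairwise_g_deriv_neg_iff_h_pos (a x : ℝ) (ha0 : 0 < a) (ha1 : a < 1)
    (hx0 : 0 < x) (hx : x < 1/2) :
    deriv (pwG a) x < 0 ↔ 0 < pwH (1/x) (a ^ x) := by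
  set c : ℝ := Real.log a with hc
  have hxne : x ≠ 0 := hx0.ne'
  set t : ℝ := a ^ x with ht
  set s : ℝ := a ^ (2 * x) with hs
  have ht0 : 0 < t := Real.rpow_pos_of_pos ha0 x
  have hs0 : 0 < s := Real.rpow_pos_of_pos ha0 (2 * x)
  -- s = t ^ 2
  have hst : s = t ^ 2 := by
    rw [hs, ht, show (2:ℝ) * x = x * 2 by ring, Real.rpow_mul ha0.le,
      Real.rpow_two]
  -- a - s ≠ 0 : since 2x < 1 and a < 1, a^(2x) > a
  have hsa : a < s := by
    have : a ^ (2 * x) > a ^ (1:ℝ) :=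
      Real.rpow_lt_rpow_of_exponent_gt ha0 ha1 (by linarith)
    simpa [Real.rpow_one] using this
  have hden : a - s ≠ 0 := by linarith
  have hden2 : a - t ^ 2 ≠ 0 := hst ▸ hden
  -- rewrite pwG using exp
  have hfun : pwG a = fun y =>
      ((Real.exp (c * (2 * y)) - Real.exp (c * y)) /
        (a - Real.exp (c * (2 * y)))) * (1 / y - 2) := by
    funext y
    rw [pwG, Real.rpow_def_of_pos ha0, Real.rpow_def_of_pos ha0]
  have hts : Real.exp (c * x) = t := (Real.rpow_def_of_pos ha0 x).symm
  have hss : Real.exp (c * (2 * x)) = s := (Real.rpow_def_of_pos ha0 (2 * x)).symm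
  -- derivatives
  have hexp : ∀ k : ℝ, HasDerivAt (fun y : ℝ => Real.exp (k * y))
      (Real.exp (k * x) * k) x := fun k => by
    simpa using ((hasDerivAt_id x).const_mul k).exp
  have h1 : HasDerivAt (fun y : ℝ => Real.exp (c * y)) (t * c) x := by
    have := hexp c; rwa [hts] at this
  have h2 : HasDerivAt (fun y : ℝ => Real.exp (c * (2 * y))) (s * (c * 2)) x := by
    have heq : (fun y : ℝ => Real.exp (c * (2 * y))) =
        fun y : ℝ => Real.exp ((c * 2) * y) := by funext y; ring_nf
    have := hexp (c * 2)
    rw [← heq] at this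
    rwa [show (c * 2) * x = c * (2 * x) by ring, hss] at this
  have hnum : HasDerivAt (fun y : ℝ => Real.exp (c * (2 * y)) - Real.exp (c * y))
      (s * (c * 2) - t * c) x := h2.sub h1
  have hden' : HasDerivAt (fun y : ℝ => a - Real.exp (c * (2 * y)))
      (0 - s * (c * 2)) x := (hasDerivAt_const x a).sub h2
  have hdenval : a - Real.exp (c * (2 * x)) ≠ 0 := by rw [hss]; exact hden
  have hu : HasDerivAt
      (fun y : ℝ => (Real.exp (c * (2 * y)) - Real.exp (c * y)) /
        (a - Real.exp (c * (2 * y))))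
      (((s * (c * 2) - t * c) * (a - s) - (s - t) * (0 - s * (c * 2))) /
        (a - s) ^ 2) x := by
    have := hnum.div hden' hdenval
    exact this.congr_deriv (by simp only [hss, hts])
  have hv : HasDerivAt (fun y : ℝ => 1 / y - 2) (-(x ^ 2)⁻¹) x := by
    simpa [one_div] using (hasDerivAt_inv hxne).sub_const 2
  have hg : HasDerivAt (pwG a)
      ((((s * (c * 2) - t * c) * (a - s) - (s - t) * (0 - s * (c * 2))) /
        (a - s) ^ 2) * (1 / x - 2) + ((s - t) / (a - s)) * (-(x ^ 2)⁻¹)) x := by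
    rw [hfun]
    exact (hu.mul hv).congr_deriv (by simp only [hss, hts])
  set D : ℝ := (((s * (c * 2) - t * c) * (a - s) - (s - t) * (0 - s * (c * 2))) /
        (a - s) ^ 2) * (1 / x - 2) + ((s - t) / (a - s)) * (-(x ^ 2)⁻¹) with hD
  rw [hg.deriv]
  -- rewrite pwH
  have hp1 : t ^ ((1/x : ℝ) - 2) = a / t ^ 2 := by
    rw [ht, ← Real.rpow_mul ha0.le,
      show x * ((1/x : ℝ) - 2) = 1 - 2 * x by field_simp,
      Real.rpow_sub ha0, Real.rpow_one, ← hs, hst]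
  have hp2 : t ^ ((1/x : ℝ) - 1) = a / t := by
    rw [ht, ← Real.rpow_mul ha0.le,
      show x * ((1/x : ℝ) - 1) = 1 - x by field_simp,
      Real.rpow_sub ha0, Real.rpow_one, ← ht]
  have hlt : Real.log t = x * c := by rw [ht, Real.log_rpow ha0]
  have hH : pwH (1/x) (a ^ x) =
      (1/x) * (1 - t) * (1 - a / t ^ 2) +
        (1/x - 2) * (1 + a / t ^ 2 - 2 * (a / t)) * (x * c) := by
    rw [pwH, ← ht, hp1, hp2, hlt]
  rw [hH]
  set H : ℝ := (1/x) * (1 - t) * (1 - a / t ^ 2) +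
        (1/x - 2) * (1 + a / t ^ 2 - 2 * (a / t)) * (x * c) with hHdef
  -- key algebraic identity
  have key : t ^ 3 * H = (-D) * (x * (a - t ^ 2) ^ 2) := by
    rw [hHdef, hD, hst]
    field_simp [hden2, hxne, ht0.ne']
    ring
  have hP : 0 < x * (a - t ^ 2) ^ 2 := by
    apply mul_pos hx0
    positivity
  have ht3 : (0:ℝ) < t ^ 3 := by positivity
  constructor
  · intro hDneg
    have h1' : 0 < (-D) * (x * (a - t ^ 2) ^ 2) := mul_pos (by linarith) hP
    rw [← key] at h1'
    rcases mul_pos_iff.mp h1' with ⟨_, h⟩ | ⟨h, _⟩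
    · exact h
    · linarith
  · intro hHpos
    have h1' : 0 < t ^ 3 * H := mul_pos ht3 hHpos
    rw [key] at h1'
    rcases mul_pos_iff.mp h1' with ⟨h, _⟩ | ⟨_, h⟩
    · linarith
    · linarith
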